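/- On a tree, the count messages of consensus propagation converge to subtree sizes: after t ≥ depth iterations (in particular after D = diameter iterations), υ_{k→j}^{[t]} equals the number of nodes in the component of the tree containing k when the edge {k,j} is removed. -/

import Mathlib

open Finset

section CPaux

open SimpleGraph

set_option linter.unusedSectionVars false

variable {V : Type} [Fintype V] [DecidableEq V] {G : SimpleGraph V} [DecidableRel G.Adj]

private lemma bridge_not_reach (hT : G.IsAcyclic) {k j : V} (h : G.Adj k j) :
    ¬ (G.deleteEdges {s(k, j)}).Reachable k j := by
  have hb := (isAcyclic_iff_forall_adj_isBridge.mp hT) h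
  exact isBridge_iff.mp hb

private lemma not_mem_support (hT : G.IsAcyclic) {k j v : V} (h : G.Adj k j)
    (p : (G.deleteEdges {s(k, j)}).Walk k v) : j ∉ p.support := by
  intro hj
  exact bridge_not_reach hT h ⟨p.takeUntil j hj⟩

/-- edges of a walk avoiding a vertex `k` differ from any edge `s(k, j)`. -/
private lemma edge_ne_of_not_mem_support {H : SimpleGraph V} {a b k j : V}
    {p : H.Walk a b} (hk : k ∉ p.support) : ∀ e ∈ p.edges, e ≠ s(k, j) := by
  intro e he hcon
  rw [hcon] at he
  exact hk (p.fst_mem_support_of_mem_edges he)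

open scoped Classical in
private noncomputable def Bset (G : SimpleGraph V) (t : ℕ) (k j : V) : Finset V :=
  univ.filter (fun v => ∃ p : (G.deleteEdges {s(k, j)}).Walk k v, p.length < t)

private lemma mem_Bset {t : ℕ} {k j v : V} :
    v ∈ Bset G t k j ↔ ∃ p : (G.deleteEdges {s(k, j)}).Walk k v, p.length < t := by
  classical
  simp [Bset]

private lemma not_mem_Bset_self (hT : G.IsAcyclic) {t : ℕ} {i k : V} (h : G.Adj i k) :
    k ∉ Bset G t i k := by
  rw [mem_Bset]
  rintro ⟨p, -⟩
  exact bridge_not_reach hT h ⟨p⟩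

private lemma Bset_succ (hT : G.IsAcyclic) {t : ℕ} {k j : V} (h : G.Adj k j) :
    Bset G (t + 1) k j =
      insert k (((G.neighborFinset k).erase j).biUnion (fun i => Bset G t i k)) := by
  ext v
  simp only [Finset.mem_insert, Finset.mem_biUnion, Finset.mem_erase,
    SimpleGraph.mem_neighborFinset, mem_Bset]
  constructor
  · rintro ⟨p, hp⟩
    have hq0 : ∃ q : (G.deleteEdges {s(k, j)}).Walk k v, q.IsPath ∧ q.length < t + 1 :=
      ⟨p.bypass, p.bypass_isPath, lt_of_le_of_lt p.length_bypass_le hp⟩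
    obtain ⟨q, hqp, hql⟩ := hq0
    cases q with
    | nil => exact Or.inl rfl
    | @cons _ i _ ha q =>
      refine Or.inr ?_
      rw [SimpleGraph.Walk.cons_isPath_iff] at hqp
      have hadj : G.Adj k i ∧ s(k, i) ∉ ({s(k, j)} : Set (Sym2 V)) :=
        SimpleGraph.deleteEdges_adj.mp ha
      have hij : i ≠ j := by
        rintro rfl
        exact hadj.2 rfl
      refine ⟨i, ⟨hij, hadj.1⟩, ?_⟩
      have hedges : ∀ e ∈ q.edges, e ∈ (G.deleteEdges {s(i, k)}).edgeSet := by
        intro e he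
        rw [SimpleGraph.edgeSet_deleteEdges]
        refine ⟨(G.edgeSet_deleteEdges {s(k, j)} ▸ q.edges_subset_edgeSet he :
          e ∈ G.edgeSet \ {s(k, j)}).1, ?_⟩
        simp only [Set.mem_singleton_iff]
        intro hcon
        exact edge_ne_of_not_mem_support (j := i) hqp.2 e he (by rw [hcon, Sym2.eq_swap])
      refine ⟨q.transfer _ hedges, ?_⟩
      rw [SimpleGraph.Walk.length_transfer]
      simp only [SimpleGraph.Walk.length_cons] at hql
      omega
  · rintro (rfl | ⟨i, ⟨hij, hki⟩, p, hp⟩)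
    · exact ⟨SimpleGraph.Walk.nil, by simp⟩
    · have hks : k ∉ p.support := not_mem_support hT hki.symm p
      have hedges : ∀ e ∈ p.edges, e ∈ (G.deleteEdges {s(k, j)}).edgeSet := by
        intro e he
        rw [SimpleGraph.edgeSet_deleteEdges]
        refine ⟨(G.edgeSet_deleteEdges {s(i, k)} ▸ p.edges_subset_edgeSet he :
          e ∈ G.edgeSet \ {s(i, k)}).1, ?_⟩
        simp only [Set.mem_singleton_iff]
        exact edge_ne_of_not_mem_support hks e he
      have hadj : (G.deleteEdges {s(k, j)}).Adj k i := by
        rw [SimpleGraph.deleteEdges_adj]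
        refine ⟨hki, ?_⟩
        simp only [Set.mem_singleton_iff, Sym2.congr_right]
        exact hij
      exact ⟨SimpleGraph.Walk.cons hadj (p.transfer _ hedges), by
        simp only [SimpleGraph.Walk.length_cons, SimpleGraph.Walk.length_transfer]
        omega⟩

private lemma Bset_disjoint (hT : G.IsAcyclic) {t : ℕ} {k i i' : V}
    (hki : G.Adj k i) (hki' : G.Adj k i') (hii : i ≠ i') :
    Disjoint (Bset G t i k) (Bset G t i' k) := by
  rw [Finset.disjoint_left]
  intro v hv hv'
  obtain ⟨p, -⟩ := mem_Bset.mp hv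
  obtain ⟨p', -⟩ := mem_Bset.mp hv'
  have hks : k ∉ p.support := not_mem_support hT hki.symm p
  have hks' : k ∉ p'.support := not_mem_support hT hki'.symm p'
  have hedges : ∀ e ∈ p.edges, e ∈ (G.deleteEdges {s(k, i)}).edgeSet := by
    intro e he
    rw [SimpleGraph.edgeSet_deleteEdges]
    have hmem := (G.edgeSet_deleteEdges {s(i, k)} ▸ p.edges_subset_edgeSet he)
    refine ⟨hmem.1, ?_⟩
    simp only [Set.mem_singleton_iff]
    intro hcon
    exact hmem.2 (by rw [hcon]; exact Sym2.eq_swap)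
  have hedges' : ∀ e ∈ p'.edges, e ∈ (G.deleteEdges {s(k, i)}).edgeSet := by
    intro e he
    rw [SimpleGraph.edgeSet_deleteEdges]
    refine ⟨(G.edgeSet_deleteEdges {s(i', k)} ▸ p'.edges_subset_edgeSet he).1, ?_⟩
    simp only [Set.mem_singleton_iff]
    exact edge_ne_of_not_mem_support hks' e he
  have hadj : (G.deleteEdges {s(k, i)}).Adj k i' := by
    rw [SimpleGraph.deleteEdges_adj]
    refine ⟨hki', ?_⟩
    simp only [Set.mem_singleton_iff, Sym2.congr_right]
    exact fun hcon => hii hcon.symm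
  have : (G.deleteEdges {s(k, i)}).Reachable k i :=
    (hadj.reachable.trans ⟨p'.transfer _ hedges'⟩).trans ⟨(p.transfer _ hedges).reverse⟩
  exact bridge_not_reach hT hki this

private lemma card_Bset_succ (hT : G.IsAcyclic) {t : ℕ} {k j : V} (h : G.Adj k j) :
    (Bset G (t + 1) k j).card =
      1 + ∑ i ∈ (G.neighborFinset k).erase j, (Bset G t i k).card := by
  rw [Bset_succ hT h, Finset.card_insert_of_notMem, Finset.card_biUnion]
  · omega
  · intro i hi i' hi' hii
    exact Bset_disjoint hT
      ((G.mem_neighborFinset k i).mp (Finset.mem_of_mem_erase hi))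
      ((G.mem_neighborFinset k i').mp (Finset.mem_of_mem_erase hi')) hii
  · simp only [Finset.mem_biUnion, not_exists]
    intro i
    rintro ⟨hi, hmem⟩
    exact not_mem_Bset_self hT
      ((G.mem_neighborFinset k i).mp (Finset.mem_of_mem_erase hi)).symm hmem

private lemma isPath_length_eq_dist (hT : G.IsTree) {u v : V} (p : G.Walk u v)
    (hp : p.IsPath) : p.length = G.dist u v := by
  have hr : G.Reachable u v := ⟨p⟩
  obtain ⟨q, hq, hql⟩ := hr.exists_path_of_dist
  have : (⟨p, hp⟩ : G.Path u v) = ⟨q, hq⟩ :=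
    isAcyclic_iff_path_unique.mp hT.2 _ _
  rw [← hql]
  exact congrArg (fun r : G.Path u v => r.val.length) this

private lemma Bset_eq_reach (hT : G.IsTree) {t : ℕ} {k j : V} (h : G.Adj k j)
    (D : ℕ) (hD : ∀ u v : V, G.dist u v ≤ D) (ht : D ≤ t) :
    ∀ v : V, v ∈ Bset G t k j ↔ (G.deleteEdges {s(k, j)}).Reachable k v := by
  intro v
  rw [mem_Bset]
  constructor
  · rintro ⟨p, -⟩
    exact ⟨p⟩
  · intro hr
    obtain ⟨w⟩ := hr
    set q := w.bypass with hq
    have hqp : q.IsPath := w.bypass_isPath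
    have hjs : j ∉ q.support := not_mem_support hT.2 h q
    have hedges : ∀ e ∈ q.edges, e ∈ G.edgeSet := by
      intro e he
      exact (G.edgeSet_deleteEdges {s(k, j)} ▸
        q.edges_subset_edgeSet he : e ∈ G.edgeSet \ {s(k, j)}).1
    set qG := q.transfer G hedges with hqG
    have hqGp : qG.IsPath := by
      rw [SimpleGraph.Walk.isPath_def, hqG, SimpleGraph.Walk.support_transfer]
      exact hqp.support_nodup
    have hjqG : j ∉ qG.support := by
      rw [hqG, SimpleGraph.Walk.support_transfer]; exact hjs
    have hconsP : (SimpleGraph.Walk.cons h.symm qG).IsPath := by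
      rw [SimpleGraph.Walk.cons_isPath_iff]
      exact ⟨hqGp, hjqG⟩
    have h1 : qG.length = G.dist k v := isPath_length_eq_dist hT qG hqGp
    have h2 : (SimpleGraph.Walk.cons h.symm qG).length = G.dist j v :=
      isPath_length_eq_dist hT _ hconsP
    rw [SimpleGraph.Walk.length_cons, h1] at h2
    refine ⟨q, ?_⟩
    have h3 : q.length = G.dist k v := by
      rw [← h1, hqG, SimpleGraph.Walk.length_transfer]
    have h4 := hD j v
    omega

end CPaux

/-- On a tree, the count messages of consensus propagation converge to subtree
sizes: for `t ≥ D` (the diameter), `υ_{k→j}^{[t]}` equals the number of nodes in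
the component of the tree containing `k` when the edge `{k, j}` is removed. -/
theorem consensus_propagation_counts_subtree {V : Type} [Fintype V] [DecidableEq V]
    (G : SimpleGraph V) [DecidableRel G.Adj] (hT : G.IsTree) (x : V → ℝ)
    (υ : ℕ → V → V → ℝ)
    (h0 : ∀ k j, υ 0 k j = 0)
    (hupd : ∀ t k j, G.Adj k j →
      υ (t + 1) k j = 1 + ∑ i ∈ (G.neighborFinset k).erase j, υ t i k)
    (D : ℕ) (hD : ∀ u v : V, G.dist u v ≤ D) :
    ∀ t k j, G.Adj k j → D ≤ t →
      υ t k j = ({v : V | (G.deleteEdges {s(k, j)}).Reachable k v}.ncard : ℝ) := by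
  classical
  have key : ∀ t, ∀ k j, G.Adj k j → υ t k j = ((Bset G t k j).card : ℝ) := by
    intro t
    induction t with
    | zero =>
      intro k j _
      have hB : Bset G 0 k j = ∅ := by
        ext v
        simp [mem_Bset]
      rw [h0, hB]
      simp
    | succ t ih =>
      intro k j hkj
      rw [hupd t k j hkj, card_Bset_succ hT.2 hkj]
      push_cast
      congr 1
      refine Finset.sum_congr rfl ?_
      intro i hi
      exact ih i k ((G.mem_neighborFinset k i).mp (Finset.mem_of_mem_erase hi)).symm
  intro t k j hkj ht
  rw [key t k j hkj]
  congr 1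
  have hiff := Bset_eq_reach hT hkj D hD ht
  have : {v : V | (G.deleteEdges {s(k, j)}).Reachable k v} = ↑(Bset G t k j) := by
    ext v
    simp only [Set.mem_setOf_eq, Finset.coe_sort_coe, Finset.mem_coe]
    exact (hiff v).symm
  rw [this, Set.ncard_coe_finset]
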